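/- Let n ≥ 1, let E_A > 0 and E_1, …, E_n > 0, and let T_A > T_B > 0. On ℂ² ⊗ (ℂ²)^{⊗n} with standard basis {e_{(b₀,b)} : b₀ ∈ {0,1}, b ∈ {0,1}^n}, let H be the diagonal Hamiltonian with H e_{(b₀,b)} = (E_A·b₀ + Σ_{j=1}^n E_j b_j) · e_{(b₀,b)}, and let ρ = γ_{T_A}(E_A) ⊗ γ_{T_B}(E_1) ⊗ ⋯ ⊗ γ_{T_B}(E_n), where γ_T(E) = diag(1, e^{−E/T})/(1 + e^{−E/T}). Assume there is no b ∈ {0,1}^n with Σ_j b_j E_j = E_A·T_B/T_A, and assume there exists b ∈ {0,1}^n with E_A·T_B/T_A < Σ_j b_j E_j < E_A. Then for every unitary U attaining the minimum of tr(U ρ U† H) over all unitaries, the vector U (e_1 ⊗ e_0 ⊗ ⋯ ⊗ e_0) lies in the span of { e_0 ⊗ e_b : b ∈ {0,1}^n, E_A·T_B/T_A < Σ_j b_j E_j < E_A }. Hence measuring the last n qubits of U(e_1 ⊗ e_{0…0}) in the computational basis yields, with certainty, a binary word b solving the KNAPSACK feasibility problem E_A > Σ_j b_j E_j > E_A·T_B/T_A.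 -/

import Mathlib

/-- The Gibbs occupation probability of level `j ∈ {0,1}` of a two-level
system with energy gap `E` at temperature `T`. -/
noncomputable def qubitProb (E T : ℝ) (j : Fin 2) : ℝ :=
  (if j = 0 then 1 else Real.exp (-E / T)) / (1 + Real.exp (-E / T))

open Matrix Finset

theorem qubitProb_eq (E T : ℝ) (j : Fin 2) :
    qubitProb E T j = Real.exp (-(E * ((j : ℕ) : ℝ)) / T) / (1 + Real.exp (-E / T)) := by
  fin_cases j <;> simp [qubitProb]

noncomputable def gva {ι : Type*} [Fintype ι] (p e : ι → ℝ) (D : Matrix ι ι ℝ) : ℝ :=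
  ∑ x, ∑ y, e x * p y * D x y

theorem gva_linear {ι : Type*} [Fintype ι] [DecidableEq ι] (p e : ι → ℝ) :
    IsLinearMap ℝ (gva p e) := by
  constructor
  · intro A B
    simp only [gva, Matrix.add_apply, mul_add, Finset.sum_add_distrib]
  · intro c A
    simp only [gva, Matrix.smul_apply, smul_eq_mul, Finset.mul_sum]
    refine Finset.sum_congr rfl fun x _ => Finset.sum_congr rfl fun y _ => by ring

theorem exists_perm_le_gva {ι : Type*} [Fintype ι] [DecidableEq ι] (p e : ι → ℝ)
    (D : Matrix ι ι ℝ) (hD : D ∈ doublyStochastic ℝ ι) :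
    ∃ σ : Equiv.Perm ι, gva p e (σ.permMatrix ℝ) ≤ gva p e D := by
  classical
  set c := Finset.univ.inf' ⟨1, Finset.mem_univ 1⟩
    (fun σ : Equiv.Perm ι => gva p e (σ.permMatrix ℝ))
  have hc : c ≤ gva p e D := by
    have hsub : {M : Matrix ι ι ℝ | ∃ σ : Equiv.Perm ι, σ.permMatrix ℝ = M} ⊆
        {M | c ≤ gva p e M} := by
      rintro M ⟨σ, rfl⟩
      exact Finset.inf'_le (fun σ : Equiv.Perm ι => gva p e (σ.permMatrix ℝ)) (Finset.mem_univ σ)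
    have hconv : Convex ℝ {M : Matrix ι ι ℝ | c ≤ gva p e M} :=
      convex_halfSpace_ge (gva_linear p e) c
    have := convexHull_min hsub hconv
    rw [← doublyStochastic_eq_convexHull_permMatrix] at this
    exact this hD
  obtain ⟨σ, -, hσ⟩ := Finset.exists_mem_eq_inf' (⟨1, Finset.mem_univ 1⟩ :
    (Finset.univ : Finset (Equiv.Perm ι)).Nonempty) (fun σ => gva p e (σ.permMatrix ℝ))
  exact ⟨σ, by rw [← hσ]; exact hc⟩

theorem perm_unitary {ι : Type*} [Fintype ι] [DecidableEq ι] (σ : Equiv.Perm ι) :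
    σ.permMatrix ℂ ∈ Matrix.unitaryGroup ι ℂ := by
  rw [Matrix.mem_unitaryGroup_iff]
  ext i j
  simp [Matrix.mul_apply, Matrix.star_apply, PEquiv.toMatrix_apply, Equiv.toPEquiv_apply,
    Matrix.one_apply, apply_ite (star : ℂ → ℂ), Equiv.eq_symm_apply]

theorem normSq_permMatrix {ι : Type*} [Fintype ι] [DecidableEq ι] (σ : Equiv.Perm ι) (x y : ι) :
    Complex.normSq (σ.permMatrix ℂ x y) = σ.permMatrix ℝ x y := by
  simp [PEquiv.toMatrix_apply, Equiv.toPEquiv_apply, apply_ite Complex.normSq]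

theorem trace_re_eq {ι : Type*} [Fintype ι] [DecidableEq ι] (p e : ι → ℝ) (V : Matrix ι ι ℂ) :
    (Matrix.trace (V * Matrix.diagonal (fun x => (p x : ℂ)) * star V *
        Matrix.diagonal (fun x => (e x : ℂ)))).re
      = gva p e (Matrix.of fun x y => Complex.normSq (V x y)) := by
  have h1 : ∀ x, (V * Matrix.diagonal (fun x => (p x : ℂ)) * star V) x x
      = ∑ y, ((p y * Complex.normSq (V x y) : ℝ) : ℂ) := by
    intro x
    rw [Matrix.mul_apply]
    simp only [Matrix.mul_diagonal, Matrix.star_apply, Complex.star_def]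
    refine Finset.sum_congr rfl fun y _ => ?_
    push_cast
    rw [← Complex.mul_conj]
    ring
  simp only [Matrix.trace, Matrix.diag_apply, Matrix.mul_diagonal, h1]
  rw [show (∑ x, (∑ y, ((p y * Complex.normSq (V x y) : ℝ) : ℂ)) * ((e x : ℝ) : ℂ))
      = ((∑ x, (∑ y, p y * Complex.normSq (V x y)) * e x : ℝ) : ℂ) by push_cast; ring]
  rw [Complex.ofReal_re]
  simp only [gva, Matrix.of_apply]
  refine Finset.sum_congr rfl fun x _ => ?_
  rw [Finset.sum_mul]
  exact Finset.sum_congr rfl fun y _ => by ring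

theorem unitary_normSq_DS {ι : Type*} [Fintype ι] [DecidableEq ι] (V : Matrix ι ι ℂ)
    (hV : V ∈ Matrix.unitaryGroup ι ℂ) :
    (Matrix.of fun x y => Complex.normSq (V x y)) ∈ doublyStochastic ℝ ι := by
  rw [mem_doublyStochastic_iff_sum]
  have h1 : V * star V = 1 := (Matrix.mem_unitaryGroup_iff.mp hV)
  have h2 : star V * V = 1 := (Matrix.mem_unitaryGroup_iff'.mp hV)
  refine ⟨fun i j => Complex.normSq_nonneg _, fun i => ?_, fun j => ?_⟩
  · have := congrArg (fun M => (M i i).re) h1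
    simp only [Matrix.mul_apply, Matrix.star_apply, Matrix.one_apply_eq, Complex.one_re] at this
    rw [show (1 : ℝ) = (∑ x, V i x * star (V i x)).re from this.symm, Complex.re_sum]
    refine Finset.sum_congr rfl fun y _ => ?_
    rw [Complex.star_def, Complex.mul_conj, Complex.ofReal_re]
    rfl
  · have := congrArg (fun M => (M j j).re) h2
    simp only [Matrix.mul_apply, Matrix.star_apply, Matrix.one_apply_eq, Complex.one_re] at this
    rw [show (1 : ℝ) = (∑ x, star (V x j) * V x j).re from this.symm, Complex.re_sum]
    refine Finset.sum_congr rfl fun y _ => ?_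
    rw [Complex.star_def, mul_comm, Complex.mul_conj, Complex.ofReal_re]
    rfl

theorem transpose_DS {ι : Type*} [Fintype ι] [DecidableEq ι] {D : Matrix ι ι ℝ}
    (hD : D ∈ doublyStochastic ℝ ι) : Dᵀ ∈ doublyStochastic ℝ ι := by
  rw [mem_doublyStochastic_iff_sum] at hD ⊢
  exact ⟨fun i j => hD.1 j i, hD.2.2, hD.2.1⟩

theorem comono {ι : Type*} [Fintype ι] [DecidableEq ι] (p e : ι → ℝ)
    (D : Matrix ι ι ℝ) (hD : D ∈ doublyStochastic ℝ ι)
    (hopt : ∀ D' ∈ doublyStochastic ℝ ι, gva p e D ≤ gva p e D')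
    {x x' y y' : ι} (h1 : 0 < D x y) (h2 : 0 < D x' y')
    (he : e x' < e x) (hp : p y' < p y) : False := by
  classical
  have hxx : x ≠ x' := fun h => absurd (h ▸ he) (lt_irrefl _)
  have hyy : y ≠ y' := fun h => absurd (h ▸ hp) (lt_irrefl _)
  set δ : ℝ := min (D x y) (D x' y') with hδ
  have hδpos : 0 < δ := lt_min h1 h2
  set χ : Matrix ι ι ℝ := Matrix.of (fun a b =>
    (if a = x then (1:ℝ) else 0) * ((if b = y' then (1:ℝ) else 0) - (if b = y then 1 else 0))
    + (if a = x' then (1:ℝ) else 0) * ((if b = y then (1:ℝ) else 0) - (if b = y' then 1 else 0)))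
    with hχ
  set D' : Matrix ι ι ℝ := D + δ • χ with hD'
  have hχ_apply : ∀ a b, χ a b =
    (if a = x then (1:ℝ) else 0) * ((if b = y' then (1:ℝ) else 0) - (if b = y then 1 else 0))
    + (if a = x' then (1:ℝ) else 0) * ((if b = y then (1:ℝ) else 0) - (if b = y' then 1 else 0)) :=
    fun a b => rfl
  have hD'mem : D' ∈ doublyStochastic ℝ ι := by
    rw [mem_doublyStochastic_iff_sum]
    obtain ⟨hnn, hrow, hcol⟩ := mem_doublyStochastic_iff_sum.mp hD
    refine ⟨fun a b => ?_, fun a => ?_, fun b => ?_⟩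
    · simp only [hD', Matrix.add_apply, Matrix.smul_apply, smul_eq_mul, hχ_apply]
      by_cases hax : a = x <;> by_cases hax' : a = x' <;>
        by_cases hby : b = y <;> by_cases hby' : b = y' <;>
        simp_all <;>
        nlinarith [hnn x y', hnn x' y, hnn x y, hnn x' y', hnn a b,
          min_le_left (D x y) (D x' y'), min_le_right (D x y) (D x' y'), le_min (hnn x y) (hnn x' y')]
    · simp only [hD', Matrix.add_apply, Matrix.smul_apply, smul_eq_mul, Finset.sum_add_distrib,
        ← Finset.mul_sum, hrow a, hχ_apply, mul_sub, mul_one, mul_zero, Finset.sum_add_distrib,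
        Finset.sum_sub_distrib, mul_ite]
      simp [Finset.sum_ite_eq']
    · simp only [hD', Matrix.add_apply, Matrix.smul_apply, smul_eq_mul, Finset.sum_add_distrib,
        ← Finset.mul_sum, hcol b, hχ_apply, mul_sub, mul_one, mul_zero, Finset.sum_add_distrib,
        Finset.sum_sub_distrib, mul_ite]
      simp [Finset.sum_ite_eq', hxx]
  have hgχ : gva p e χ = -((e x - e x') * (p y - p y')) := by
    simp only [gva, hχ_apply, mul_add, mul_sub, Finset.sum_add_distrib, Finset.sum_sub_distrib,
      mul_ite, mul_one, mul_zero, ite_mul, zero_mul]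
    simp [Finset.sum_ite_eq', Finset.mul_sum, Finset.sum_sub_distrib]
    ring
  have hgD' : gva p e D' = gva p e D + δ * gva p e χ := by
    have key : ∀ a b : ι, e a * p b * (D a b + δ * χ a b)
        = e a * p b * D a b + δ * (e a * p b * χ a b) := fun a b => by ring
    simp only [gva, hD', Matrix.add_apply, Matrix.smul_apply, smul_eq_mul, key,
      Finset.sum_add_distrib, ← Finset.mul_sum]
  have hlt : gva p e D' < gva p e D := by
    rw [hgD', hgχ]
    have := mul_pos hδpos (mul_pos (sub_pos.mpr he) (sub_pos.mpr hp))
    linarith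
  exact absurd (hopt D' hD'mem) (not_le.mpr hlt)

theorem mass_move {ι : Type*} [Fintype ι] [DecidableEq ι] (D : Matrix ι ι ℝ)
    (hD : D ∈ doublyStochastic ℝ ι) (Y L : Finset ι) (hcard : Y.card ≤ L.card)
    {x y : ι} (hx : x ∉ L) (hy : y ∈ Y) (hxy : 0 < D x y) :
    ∃ x' ∈ L, ∃ y', y' ∉ Y ∧ 0 < D x' y' := by
  classical
  by_contra hcon
  push_neg at hcon
  obtain ⟨hnn, hrow, hcol⟩ := mem_doublyStochastic_iff_sum.mp hD
  have h1 : (∑ y' ∈ Y, ∑ x' ∈ L, D x' y') + (∑ y' ∈ Y, ∑ x' ∈ Lᶜ, D x' y')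
      = (Y.card : ℝ) := by
    rw [← Finset.sum_add_distrib]
    have hsplit : ∀ y' ∈ Y, (∑ x' ∈ L, D x' y') + (∑ x' ∈ Lᶜ, D x' y') = 1 := by
      intro y' _
      rw [Finset.sum_add_sum_compl]
      exact hcol y'
    rw [Finset.sum_congr rfl hsplit]
    simp
  have h2 : (∑ x' ∈ L, ∑ y' ∈ Y, D x' y') + (∑ x' ∈ L, ∑ y' ∈ Yᶜ, D x' y')
      = (L.card : ℝ) := by
    rw [← Finset.sum_add_distrib]
    have hsplit : ∀ x' ∈ L, (∑ y' ∈ Y, D x' y') + (∑ y' ∈ Yᶜ, D x' y') = 1 := by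
      intro x' _
      rw [Finset.sum_add_sum_compl]
      exact hrow x'
    rw [Finset.sum_congr rfl hsplit]
    simp
  have hT1 : 0 < ∑ y' ∈ Y, ∑ x' ∈ Lᶜ, D x' y' := by
    have hxy' : D x y ≤ ∑ x' ∈ Lᶜ, D x' y :=
      Finset.single_le_sum (fun i _ => hnn i y) (Finset.mem_compl.mpr hx)
    have hys : ∀ i ∈ Y, (0:ℝ) ≤ ∑ x' ∈ Lᶜ, D x' i :=
      fun i _ => Finset.sum_nonneg fun j _ => hnn j i
    have := Finset.single_le_sum hys hy
    linarith
  have hT2 : (∑ x' ∈ L, ∑ y' ∈ Yᶜ, D x' y') ≤ 0 :=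
    Finset.sum_nonpos fun x' hx' => Finset.sum_nonpos fun y' hy' =>
      hcon x' hx' y' (Finset.mem_compl.mp hy')
  have hswap : (∑ y' ∈ Y, ∑ x' ∈ L, D x' y') = (∑ x' ∈ L, ∑ y' ∈ Y, D x' y') :=
    Finset.sum_comm
  have hcast : (Y.card : ℝ) ≤ (L.card : ℝ) := Nat.cast_le.mpr hcard
  linarith

theorem opt_DS {ι : Type*} [Fintype ι] [DecidableEq ι] (p e : ι → ℝ) (U : Matrix ι ι ℂ)
    (hU : U ∈ Matrix.unitaryGroup ι ℂ)
    (hopt : ∀ V ∈ Matrix.unitaryGroup ι ℂ,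
      (Matrix.trace (U * Matrix.diagonal (fun x => (p x : ℂ)) * star U *
          Matrix.diagonal (fun x => (e x : ℂ)))).re ≤
      (Matrix.trace (V * Matrix.diagonal (fun x => (p x : ℂ)) * star V *
          Matrix.diagonal (fun x => (e x : ℂ)))).re) :
    ∀ D' ∈ doublyStochastic ℝ ι,
      gva p e (Matrix.of fun a b => Complex.normSq (U a b)) ≤ gva p e D' := by
  intro D' hD'
  obtain ⟨σ, hσ⟩ := exists_perm_le_gva p e D' hD'
  have h := hopt (σ.permMatrix ℂ) (perm_unitary σ)
  rw [trace_re_eq p e U, trace_re_eq p e (σ.permMatrix ℂ)] at h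
  have heq : (Matrix.of fun a b => Complex.normSq (σ.permMatrix ℂ a b)) = σ.permMatrix ℝ := by
    ext a b; exact normSq_permMatrix σ a b
  rw [heq] at h
  exact le_trans h hσ

noncomputable def pfD (n : ℕ) (E_A T_A T_B : ℝ) (Ec : Fin n → ℝ) :
    Fin 2 × (Fin n → Fin 2) → ℝ :=
  fun x => qubitProb E_A T_A x.1 * ∏ j, qubitProb (Ec j) T_B (x.2 j)

noncomputable def efD (n : ℕ) (E_A : ℝ) (Ec : Fin n → ℝ) :
    Fin 2 × (Fin n → Fin 2) → ℝ :=
  fun x => E_A * ((x.1 : ℕ) : ℝ) + ∑ j, ((x.2 j : ℕ) : ℝ) * Ec j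

noncomputable def ffD (n : ℕ) (E_A T_A T_B : ℝ) (Ec : Fin n → ℝ) :
    Fin 2 × (Fin n → Fin 2) → ℝ :=
  fun x => E_A * ((x.1 : ℕ) : ℝ) / T_A + (∑ j, ((x.2 j : ℕ) : ℝ) * Ec j) / T_B

theorem pfD_formula (n : ℕ) (E_A T_A T_B : ℝ) (Ec : Fin n → ℝ) :
    ∃ Z : ℝ, 0 < Z ∧ ∀ x, pfD n E_A T_A T_B Ec x
      = Real.exp (-(ffD n E_A T_A T_B Ec x)) / Z := by
  refine ⟨(1 + Real.exp (-E_A / T_A)) * ∏ j, (1 + Real.exp (-Ec j / T_B)), ?_, ?_⟩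
  · exact mul_pos (by positivity) (Finset.prod_pos fun j _ => by positivity)
  · intro x
    simp only [pfD, ffD, qubitProb_eq]
    rw [Finset.prod_div_distrib, ← Real.exp_sum, div_mul_div_comm, ← Real.exp_add]
    congr 1
    have hsum : (∑ j, -(Ec j * ((x.2 j : ℕ) : ℝ)) / T_B)
        = -(∑ j, ((x.2 j : ℕ) : ℝ) * Ec j) / T_B := by
      rw [← Finset.sum_div]
      congr 1
      rw [← Finset.sum_neg_distrib]
      exact Finset.sum_congr rfl fun j _ => by ring
    rw [hsum]
    ring

/-- **The optimal heat engine as an NP-solver (KNAPSACK).**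
One hot qubit with gap `E_A` at `T_A` and `n` cold qubits with gaps `E_j` at
`T_B`: if no word `b` satisfies `∑ b_j E_j = E_A T_B / T_A` and some word `b`
satisfies `E_A T_B / T_A < ∑ b_j E_j < E_A`, then every optimal heat engine
maps the basis vector `e_1 ⊗ e_{0…0}` into the span of the basis vectors
`e_0 ⊗ e_b` with `E_A T_B / T_A < ∑ b_j E_j < E_A`. -/
theorem stmt_19 (n : ℕ) (hn : 1 ≤ n) (E_A : ℝ) (hEA : 0 < E_A)
    (Ec : Fin n → ℝ) (hEc : ∀ j, 0 < Ec j)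
    (T_A T_B : ℝ) (hTB : 0 < T_B) (hT : T_B < T_A)
    (hnodeg : ¬ ∃ b : Fin n → Fin 2, (∑ j, ((b j : ℕ) : ℝ) * Ec j) = E_A * T_B / T_A)
    (hfeas : ∃ b : Fin n → Fin 2,
      E_A * T_B / T_A < (∑ j, ((b j : ℕ) : ℝ) * Ec j) ∧
      (∑ j, ((b j : ℕ) : ℝ) * Ec j) < E_A)
    (U : Matrix (Fin 2 × (Fin n → Fin 2)) (Fin 2 × (Fin n → Fin 2)) ℂ)
    (hU : U ∈ Matrix.unitaryGroup (Fin 2 × (Fin n → Fin 2)) ℂ)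
    (hopt : ∀ V ∈ Matrix.unitaryGroup (Fin 2 × (Fin n → Fin 2)) ℂ,
      (Matrix.trace (U *
          Matrix.diagonal (fun x : Fin 2 × (Fin n → Fin 2) =>
            ((qubitProb E_A T_A x.1 * ∏ j, qubitProb (Ec j) T_B (x.2 j) : ℝ) : ℂ)) *
          star U *
          Matrix.diagonal (fun x : Fin 2 × (Fin n → Fin 2) =>
            ((E_A * ((x.1 : ℕ) : ℝ) + ∑ j, ((x.2 j : ℕ) : ℝ) * Ec j : ℝ) : ℂ)))).re ≤
      (Matrix.trace (V *
          Matrix.diagonal (fun x : Fin 2 × (Fin n → Fin 2) =>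
            ((qubitProb E_A T_A x.1 * ∏ j, qubitProb (Ec j) T_B (x.2 j) : ℝ) : ℂ)) *
          star V *
          Matrix.diagonal (fun x : Fin 2 × (Fin n → Fin 2) =>
            ((E_A * ((x.1 : ℕ) : ℝ) + ∑ j, ((x.2 j : ℕ) : ℝ) * Ec j : ℝ) : ℂ)))).re) :
    U.mulVec (Pi.single ((1 : Fin 2), fun _ => (0 : Fin 2)) 1) ∈
      Submodule.span ℂ {v : (Fin 2 × (Fin n → Fin 2)) → ℂ |
        ∃ b : Fin n → Fin 2,
          (E_A * T_B / T_A < (∑ j, ((b j : ℕ) : ℝ) * Ec j) ∧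
            (∑ j, ((b j : ℕ) : ℝ) * Ec j) < E_A) ∧
          v = Pi.single ((0 : Fin 2), b) 1} := by
  classical
  have hTA : 0 < T_A := hTB.trans hT
  obtain ⟨bstar, hb1, hb2⟩ := hfeas
  let pf : (Fin 2 × (Fin n → Fin 2)) → ℝ := pfD n E_A T_A T_B Ec
  let ef : (Fin 2 × (Fin n → Fin 2)) → ℝ := efD n E_A Ec
  let ff : (Fin 2 × (Fin n → Fin 2)) → ℝ := ffD n E_A T_A T_B Ec
  let y₀ : (Fin 2 × (Fin n → Fin 2)) := ((1 : Fin 2), fun _ => (0 : Fin 2))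
  -- basic facts
  have hsnn : ∀ b : Fin n → Fin 2, 0 ≤ ∑ j, ((b j : ℕ) : ℝ) * Ec j :=
    fun b => Finset.sum_nonneg fun j _ => mul_nonneg (by positivity) (hEc j).le
  have hszero : ∀ b : Fin n → Fin 2, (∑ j, ((b j : ℕ) : ℝ) * Ec j) = 0 →
      b = fun _ => (0 : Fin 2) := by
    intro b hb
    funext j
    have hterm := (Finset.sum_eq_zero_iff_of_nonneg
      (fun j _ => mul_nonneg (by positivity) (hEc j).le)).mp hb j (Finset.mem_univ j)
    have h1 : ((b j : ℕ) : ℝ) = 0 := by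
      rcases mul_eq_zero.mp hterm with h' | h'
      · exact h'
      · exact absurd h' (hEc j).ne'
    have h2 : (b j : ℕ) = 0 := Nat.cast_eq_zero.mp h1
    omega
  have hffy₀ : ff y₀ = E_A / T_A := by
    simp [ff, ffD, y₀]
  have hefy₀ : ef y₀ = E_A := by
    simp [ef, efD, y₀]
  have hef0 : ∀ x : (Fin 2 × (Fin n → Fin 2)), x.1 = 0 → ef x = ∑ j, ((x.2 j : ℕ) : ℝ) * Ec j := by
    intro x h; simp [ef, efD, h]
  have hff0 : ∀ x : (Fin 2 × (Fin n → Fin 2)), x.1 = 0 → ff x = (∑ j, ((x.2 j : ℕ) : ℝ) * Ec j) / T_B := by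
    intro x h; simp [ff, ffD, h]
  have hef1 : ∀ x : (Fin 2 × (Fin n → Fin 2)), x.1 = 1 → ef x = E_A + ∑ j, ((x.2 j : ℕ) : ℝ) * Ec j := by
    intro x h; simp [ef, efD, h]
  have hff1 : ∀ x : (Fin 2 × (Fin n → Fin 2)), x.1 = 1 →
      ff x = E_A / T_A + (∑ j, ((x.2 j : ℕ) : ℝ) * Ec j) / T_B := by
    intro x h; simp [ff, ffD, h]
  have hx1cases : ∀ x : (Fin 2 × (Fin n → Fin 2)), x.1 = 0 ∨ x.1 = 1 := by
    intro x
    rcases x with ⟨x1, x2⟩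
    fin_cases x1
    · exact Or.inl rfl
    · exact Or.inr rfl
  have hc0lt : E_A * T_B / T_A < E_A := by
    rw [div_lt_iff₀ hTA]; nlinarith
  -- monotonicity
  obtain ⟨Z, hZpos, hpZ⟩ := pfD_formula n E_A T_A T_B Ec
  have hpmono : ∀ a b : (Fin 2 × (Fin n → Fin 2)), ff a < ff b → pf b < pf a := by
    intro a b h
    show pfD n E_A T_A T_B Ec b < pfD n E_A T_A T_B Ec a
    rw [hpZ, hpZ]
    exact (div_lt_div_iff_of_pos_right hZpos).mpr (Real.exp_lt_exp.mpr (neg_lt_neg h))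
  -- classification
  have G2 : ∀ x : (Fin 2 × (Fin n → Fin 2)), ef x < E_A → x.1 = 0 := by
    intro x hlt
    rcases hx1cases x with h | h
    · exact h
    · exfalso
      rw [hef1 x h] at hlt
      have := hsnn x.2
      linarith
  have G1 : ∀ x : (Fin 2 × (Fin n → Fin 2)), ff x < ff y₀ →
      x.1 = 0 ∧ (∑ j, ((x.2 j : ℕ) : ℝ) * Ec j) < E_A * T_B / T_A := by
    intro x hlt
    rw [hffy₀] at hlt
    rcases hx1cases x with h | h
    · refine ⟨h, ?_⟩
      rw [hff0 x h] at hlt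
      rw [lt_div_iff₀ hTA]
      have := (div_lt_div_iff₀ hTB hTA).mp hlt
      linarith
    · exfalso
      rw [hff1 x h] at hlt
      have h1 := hsnn x.2
      have h2 : 0 ≤ (∑ j, ((x.2 j : ℕ) : ℝ) * Ec j) / T_B := div_nonneg h1 hTB.le
      linarith
  have G3 : ∀ x : (Fin 2 × (Fin n → Fin 2)), x.1 = 0 → (∑ j, ((x.2 j : ℕ) : ℝ) * Ec j) < E_A * T_B / T_A →
      ff x < ff y₀ := by
    intro x h hs
    rw [hff0 x h, hffy₀, div_lt_div_iff₀ hTB hTA]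
    have := (lt_div_iff₀ hTA).mp hs
    linarith
  have huniq : ∀ x : (Fin 2 × (Fin n → Fin 2)), ff x = ff y₀ → x = y₀ := by
    intro x hx
    rcases hx1cases x with h | h
    · exfalso
      apply hnodeg
      rw [hff0 x h, hffy₀, div_eq_div_iff hTB.ne' hTA.ne'] at hx
      exact ⟨x.2, by rw [eq_div_iff hTA.ne']; linarith⟩
    · rw [hff1 x h, hffy₀] at hx
      have hs0 : (∑ j, ((x.2 j : ℕ) : ℝ) * Ec j) / T_B = 0 := by linarith
      have hs : (∑ j, ((x.2 j : ℕ) : ℝ) * Ec j) = 0 :=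
        (div_eq_zero_iff.mp hs0).resolve_right hTB.ne'
      have hb := hszero x.2 hs
      have : x = (x.1, x.2) := rfl
      rw [this, h, hb]
  -- the doubly stochastic matrix of U
  set D : Matrix (Fin 2 × (Fin n → Fin 2)) (Fin 2 × (Fin n → Fin 2)) ℝ := Matrix.of (fun a b => Complex.normSq (U a b)) with hDdef
  have hDS : D ∈ doublyStochastic ℝ (Fin 2 × (Fin n → Fin 2)) := unitary_normSq_DS U hU
  have hDopt : ∀ D' ∈ doublyStochastic ℝ (Fin 2 × (Fin n → Fin 2)), gva pf ef D ≤ gva pf ef D' :=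
    opt_DS pf ef U hU hopt
  have hDnn : ∀ a b : (Fin 2 × (Fin n → Fin 2)), 0 ≤ D a b := fun a b => Complex.normSq_nonneg _
  -- finsets
  set M : Finset (Fin 2 × (Fin n → Fin 2)) := Finset.univ.filter (fun x => ff x < ff y₀) with hM
  set Yf : Finset (Fin 2 × (Fin n → Fin 2)) := Finset.univ.filter (fun x => ff x ≤ ff y₀) with hYf
  set Lf : Finset (Fin 2 × (Fin n → Fin 2)) := Finset.univ.filter (fun x => ef x < E_A) with hLf
  have hy₀nM : y₀ ∉ M := by simp [hM]
  have hYeq : Yf = insert y₀ M := by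
    ext z
    simp only [hYf, hM, Finset.mem_insert, Finset.mem_filter, Finset.mem_univ, true_and]
    constructor
    · intro hz
      rcases lt_or_eq_of_le hz with h | h
      · exact Or.inr h
      · exact Or.inl (huniq z h)
    · rintro (rfl | h)
      · exact le_refl _
      · exact h.le
  have hMsubL : M ⊆ Lf := by
    intro z hz
    simp only [hM, Finset.mem_filter, Finset.mem_univ, true_and] at hz
    simp only [hLf, Finset.mem_filter, Finset.mem_univ, true_and]
    obtain ⟨h0, hs⟩ := G1 z hz
    rw [hef0 z h0]
    exact hs.trans hc0lt
  set ystar : (Fin 2 × (Fin n → Fin 2)) := ((0 : Fin 2), bstar) with hystar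
  have hystarL : ystar ∈ Lf := by
    simp only [hLf, Finset.mem_filter, Finset.mem_univ, true_and]
    rw [hef0 ystar rfl]
    exact hb2
  have hystarnM : ystar ∉ M := by
    simp only [hM, Finset.mem_filter, Finset.mem_univ, true_and, not_lt]
    rw [hff0 ystar rfl, hffy₀, div_le_div_iff₀ hTA hTB]
    have := (div_lt_iff₀ hTA).mp hb1
    linarith
  have hcardYL : Yf.card ≤ Lf.card := by
    rw [hYeq, Finset.card_insert_of_notMem hy₀nM]
    have hsub : insert ystar M ⊆ Lf := Finset.insert_subset hystarL hMsubL
    calc M.card + 1 = (insert ystar M).card :=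
          (Finset.card_insert_of_notMem hystarnM).symm
      _ ≤ Lf.card := Finset.card_le_card hsub
  -- step 1
  have step1 : ∀ a b : (Fin 2 × (Fin n → Fin 2)), ff b ≤ ff y₀ → 0 < D a b → ef a < E_A := by
    intro a b hfb hDab
    by_contra hna
    push_neg at hna
    have haL : a ∉ Lf := by
      simp only [hLf, Finset.mem_filter, Finset.mem_univ, true_and, not_lt]
      exact hna
    have hbY : b ∈ Yf := by
      simp only [hYf, Finset.mem_filter, Finset.mem_univ, true_and]
      exact hfb
    obtain ⟨x', hx'L, y', hy'Y, hpos⟩ := mass_move D hDS Yf Lf hcardYL haL hbY hDab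
    simp only [hLf, Finset.mem_filter, Finset.mem_univ, true_and] at hx'L
    simp only [hYf, Finset.mem_filter, Finset.mem_univ, true_and, not_le] at hy'Y
    exact comono pf ef D hDS hDopt hDab hpos (lt_of_lt_of_le hx'L hna)
      (hpmono b y' (lt_of_le_of_lt hfb hy'Y))
  -- step 2
  have step2 : ∀ a : (Fin 2 × (Fin n → Fin 2)), 0 < D a y₀ → ¬ (ff a < ff y₀) := by
    intro a hDa hfa
    have haM : a ∈ M := by
      simp only [hM, Finset.mem_filter, Finset.mem_univ, true_and]
      exact hfa
    have hDt : 0 < Dᵀ y₀ a := hDa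
    obtain ⟨y₁, hy₁M, x₁, hx₁M, hpos⟩ :=
      mass_move Dᵀ (transpose_DS hDS) M M le_rfl hy₀nM haM hDt
    have hposD : 0 < D x₁ y₁ := hpos
    obtain ⟨ha0, has⟩ := G1 a hfa
    have hefa : ef a < E_A * T_B / T_A := by
      rw [hef0 a ha0]; exact has
    have hefx₁ : ef a < ef x₁ := by
      by_contra hle
      push_neg at hle
      have h5 : ef x₁ < E_A * T_B / T_A := lt_of_le_of_lt hle hefa
      have h6 : x₁.1 = 0 := G2 x₁ (h5.trans hc0lt)
      have h7 : ff x₁ < ff y₀ := G3 x₁ h6 (by rw [← hef0 x₁ h6]; exact h5)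
      exact hx₁M (by simp only [hM, Finset.mem_filter, Finset.mem_univ, true_and]; exact h7)
    have hy₁lt : ff y₁ < ff y₀ := by
      simpa only [hM, Finset.mem_filter, Finset.mem_univ, true_and] using hy₁M
    exact comono pf ef D hDS hDopt hposD hDa hefx₁ (hpmono y₁ y₀ hy₁lt)
  -- column support characterization
  have hcol : ∀ a : (Fin 2 × (Fin n → Fin 2)), U a y₀ ≠ 0 → a.1 = 0 ∧
      E_A * T_B / T_A < (∑ j, ((a.2 j : ℕ) : ℝ) * Ec j) ∧
      (∑ j, ((a.2 j : ℕ) : ℝ) * Ec j) < E_A := by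
    intro a hUa
    have hDa : 0 < D a y₀ := Complex.normSq_pos.mpr hUa
    have hlt : ef a < E_A := step1 a y₀ le_rfl hDa
    have ha0 : a.1 = 0 := G2 a hlt
    have hhi : (∑ j, ((a.2 j : ℕ) : ℝ) * Ec j) < E_A := by
      rw [← hef0 a ha0]; exact hlt
    have hnm := step2 a hDa
    push_neg at hnm
    have hge : ff y₀ ≤ ff a := hnm
    rw [hff0 a ha0, hffy₀] at hge
    have hlo : E_A * T_B / T_A ≤ ∑ j, ((a.2 j : ℕ) : ℝ) * Ec j := by
      rw [div_le_iff₀ hTA]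
      have := (div_le_div_iff₀ hTA hTB).mp hge
      linarith
    have hne : (∑ j, ((a.2 j : ℕ) : ℝ) * Ec j) ≠ E_A * T_B / T_A :=
      fun h => hnodeg ⟨a.2, h⟩
    exact ⟨ha0, lt_of_le_of_ne hlo (Ne.symm hne), hhi⟩
  -- conclude
  have hv : U.mulVec (Pi.single y₀ 1) = fun a => U a y₀ := by
    funext a
    simp [Matrix.mulVec, dotProduct, Pi.single_apply]
  show U.mulVec (Pi.single y₀ 1) ∈ _
  rw [hv]
  have hrepr : (fun a => U a y₀) = ∑ a : (Fin 2 × (Fin n → Fin 2)), U a y₀ • (Pi.single a 1 : (Fin 2 × (Fin n → Fin 2)) → ℂ) := by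
    funext i
    rw [Finset.sum_apply]
    simp [Pi.single_apply]
  rw [hrepr]
  refine Submodule.sum_mem _ fun a _ => ?_
  by_cases hUa : U a y₀ = 0
  · simp [hUa]
  · refine Submodule.smul_mem _ _ (Submodule.subset_span ?_)
    obtain ⟨h0, hlo, hhi⟩ := hcol a hUa
    refine ⟨a.2, ⟨hlo, hhi⟩, ?_⟩
    have ha : a = ((0 : Fin 2), a.2) := Prod.ext h0 rfl
    rw [← ha]
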